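/- Let $U:[0,R)\to\mathbb{R}$ be a twice continuously differentiable nonnegative function with $U(0)=0$, $U'(0)=0$, satisfying $U''(r)+\frac{N-1}{r}U'(r)\le C$ for all $r\in(0,R)$, where $N\ge 1$ and $C>0$. Then $U(r)\le \frac{C}{2N} r^2$ for all $r\in[0,R)$. -/

import Mathlib

/-- The ODE inequality underlying optimal quadratic regularity: if `U` is a nonnegative
`C²` function on `[0,R)` with `U(0)=U'(0)=0` and `U'' + (N-1)/r · U' ≤ C`, then
`U(r) ≤ C/(2N) r²`. -/
theorem stmt0 (N : ℕ) (hN : 1 ≤ N) (C R : ℝ) (hC : 0 < C) (hR : 0 < R)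
    (U U' U'' : ℝ → ℝ)
    (hU1 : ∀ r ∈ Set.Ico (0:ℝ) R, HasDerivAt U (U' r) r)
    (hU2 : ∀ r ∈ Set.Ico (0:ℝ) R, HasDerivAt U' (U'' r) r)
    (hU''cont : ContinuousOn U'' (Set.Ico 0 R))
    (hUnonneg : ∀ r ∈ Set.Ico (0:ℝ) R, 0 ≤ U r)
    (hU0 : U 0 = 0) (hU'0 : U' 0 = 0)
    (hineq : ∀ r ∈ Set.Ioo (0:ℝ) R, U'' r + (N - 1) / r * U' r ≤ C) :
    ∀ r ∈ Set.Ico (0:ℝ) R, U r ≤ C / (2 * N) * r ^ 2 := by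
  have hNpos : (0:ℝ) < N := by exact_mod_cast hN
  set W : ℝ → ℝ := fun r => r ^ (N-1) * U' r - C / N * r ^ N with hWdef
  have hWderiv : ∀ r ∈ Set.Ico (0:ℝ) R,
      HasDerivAt W (((N-1:ℕ):ℝ) * r ^ (N-1-1) * U' r + r ^ (N-1) * U'' r
        - C / N * ((N:ℝ) * r ^ (N-1))) r := by
    intro r hr
    exact ((hasDerivAt_pow (N-1) r).mul (hU2 r hr)).sub
      ((hasDerivAt_pow N r).const_mul (C/N))
  have key : ∀ x : ℝ, 0 < x →
      ((N-1:ℕ):ℝ) * x ^ (N-1-1) = ((N:ℝ)-1)/x * x ^ (N-1) := by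
    intro x hx
    rcases eq_or_lt_of_le hN with h | h
    · simp [← h]
    · have hsucc : N - 1 = (N-1-1) + 1 := by omega
      rw [Nat.cast_sub hN, hsucc, pow_succ]
      field_simp
      rw [show N-1-1+1-1 = N-1-1 by omega, Nat.cast_one]
  -- Step 1: U' r ≤ C/N * r on Ico 0 R
  have hU'le : ∀ r ∈ Set.Ico (0:ℝ) R, U' r ≤ C / N * r := by
    intro r hr
    rcases eq_or_lt_of_le hr.1 with h0 | h0
    · rw [← h0, hU'0]; simp
    · have hsub : Set.Icc (0:ℝ) r ⊆ Set.Ico 0 R :=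
        fun x hx => ⟨hx.1, lt_of_le_of_lt hx.2 hr.2⟩
      have hWcont : ContinuousOn W (Set.Icc 0 r) :=
        fun x hx => ((hWderiv x (hsub hx)).continuousAt).continuousWithinAt
      have hWdiff : ∀ x ∈ Set.Ioo (0:ℝ) r, DifferentiableAt ℝ W x :=
        fun x hx => (hWderiv x (hsub ⟨hx.1.le, hx.2.le⟩)).differentiableAt
      have hWd0 : ∀ x ∈ Set.Ioo (0:ℝ) r, deriv W x ≤ 0 := by
        intro x hx
        have hxI : x ∈ Set.Ico (0:ℝ) R := hsub ⟨hx.1.le, hx.2.le⟩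
        rw [(hWderiv x hxI).deriv, key x hx.1]
        have hC' : C / N * ((N:ℝ) * x ^ (N-1)) = C * x ^ (N-1) := by
          field_simp
        rw [hC']
        have hineq' := hineq x ⟨hx.1, lt_trans hx.2 hr.2⟩
        have hpow : (0:ℝ) ≤ x ^ (N-1) := pow_nonneg hx.1.le _
        nlinarith [mul_le_mul_of_nonneg_left hineq' hpow]
      have hanti : AntitoneOn W (Set.Icc 0 r) := by
        apply antitoneOn_of_deriv_nonpos (convex_Icc 0 r) hWcont
        · rw [interior_Icc]; exact fun x hx => (hWdiff x hx).differentiableWithinAt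
        · rw [interior_Icc]; exact hWd0
      have hle : W r ≤ W 0 := hanti (Set.left_mem_Icc.2 hr.1) ⟨hr.1, le_refl r⟩ hr.1
      have hW0 : W 0 = 0 := by
        simp [hWdef, hU'0, zero_pow (by omega : N ≠ 0)]
      rw [hW0] at hle
      have hrpow : (0:ℝ) < r ^ (N-1) := pow_pos h0 _
      have hNeq : r ^ N = r * r ^ (N-1) := by
        conv_lhs => rw [show N = (N-1) + 1 by omega]
        rw [pow_succ]; ring
      have hmain : r ^ (N-1) * U' r ≤ C / N * (r * r ^ (N-1)) := by
        have h' := hle; simp only [hWdef] at h'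
        rw [hNeq] at h'; linarith
      calc U' r = r ^ (N-1) * U' r / r ^ (N-1) := by field_simp
        _ ≤ C / N * (r * r ^ (N-1)) / r ^ (N-1) :=
            div_le_div_of_nonneg_right hmain hrpow.le
        _ = C / N * r := by field_simp
  -- Step 2: conclude
  intro r hr
  rcases eq_or_lt_of_le hr.1 with h0 | h0
  · rw [← h0, hU0]; simp
  · set G : ℝ → ℝ := fun x => U x - C / (2*N) * x ^ 2 with hGdef
    have hGderiv : ∀ x ∈ Set.Ico (0:ℝ) R,
        HasDerivAt G (U' x - C / (2*N) * (2*x)) x := by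
      intro x hx
      have h2 : HasDerivAt (fun x : ℝ => C / (2*N) * x ^ 2) (C / (2*N) * (2*x)) x := by
        have := (hasDerivAt_pow 2 x).const_mul (C/(2*N))
        simpa using this
      exact (hU1 x hx).sub h2
    have hsub : Set.Icc (0:ℝ) r ⊆ Set.Ico 0 R :=
      fun x hx => ⟨hx.1, lt_of_le_of_lt hx.2 hr.2⟩
    have hGcont : ContinuousOn G (Set.Icc 0 r) :=
      fun x hx => ((hGderiv x (hsub hx)).continuousAt).continuousWithinAt
    have hGd0 : ∀ x ∈ Set.Ioo (0:ℝ) r, deriv G x ≤ 0 := by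
      intro x hx
      have hxI : x ∈ Set.Ico (0:ℝ) R := hsub ⟨hx.1.le, hx.2.le⟩
      rw [(hGderiv x hxI).deriv]
      have hU'x := hU'le x hxI
      have : C / (2*N) * (2*x) = C / N * x := by field_simp
      rw [this]; linarith
    have hanti : AntitoneOn G (Set.Icc 0 r) := by
      apply antitoneOn_of_deriv_nonpos (convex_Icc 0 r) hGcont
      · rw [interior_Icc]
        exact fun x hx => (hGderiv x (hsub ⟨hx.1.le, hx.2.le⟩)).differentiableAt.differentiableWithinAt
      · rw [interior_Icc]; exact hGd0
    have hle : G r ≤ G 0 := hanti (Set.left_mem_Icc.2 hr.1) ⟨hr.1, le_refl r⟩ hr.1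
    have hG0 : G 0 = 0 := by simp [hGdef, hU0]
    rw [hG0] at hle
    simp only [hGdef] at hle
    linarith
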